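/- Let P be an LPOD and let N be a Brewka answer set of P. Then there exists a unique three-valued interpretation M such that N = collapse(M) and M is a three-valued answer set of P. -/

import Mathlib

/-! Four truth values F < F* < T* < T. -/
inductive V4 : Type
  | F | Fs | Ts | T
  deriving DecidableEq, Repr

instance : Fintype V4 :=
  Fintype.ofList [V4.F, V4.Fs, V4.Ts, V4.T] (fun x => by cases x <;> simp)

namespace V4

def toNat : V4 → ℕ
  | F => 0
  | Fs => 1
  | Ts => 2
  | T => 3

theorem toNat_injective : Function.Injective toNat := by
  intro a b h
  cases a <;> cases b <;> simp_all [toNat]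

instance : LinearOrder V4 := LinearOrder.lift' toNat toNat_injective

instance : BoundedOrder V4 where
  top := T
  le_top a := by cases a <;> decide
  bot := F
  bot_le a := by cases a <;> decide

/-- Negation-as-failure: `not φ` is `T` if `φ ≤ F*`, else `F`. -/
def notv (a : V4) : V4 := if a ≤ Fs then T else F

/-- Ordered disjunction on truth values: `u × v = v` if `u = F*`, else `u`. -/
def times (a b : V4) : V4 := if a = Fs then b else a

end V4

variable {α : Type}

/-- A ground literal: an atom together with a polarity (`true` = the atom itself,
`false` = its strong negation). -/
structure Lit (α : Type) where
  atom : α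
  positive : Bool
  deriving DecidableEq

/-- A (four-valued) interpretation assigns a truth value to every literal.
Three-valued interpretations are the `solid` ones (no `T*` value). -/
abbrev Interp (α : Type) := Lit α → V4

/-- `I` is solid (equivalently, three-valued) if it assigns `T*` to no literal. -/
def solid (I : Interp α) : Prop := ∀ l, I l ≠ V4.Ts

/-- `I` is consistent: no atom has both the atom and its strong negation `T`. -/
def consistentI (I : Interp α) : Prop :=
  ∀ a : α, ¬ (I ⟨a, true⟩ = V4.T ∧ I ⟨a, false⟩ = V4.T)

/-- `I` takes values only in `{F, T}`. -/
def twoValued (I : Interp α) : Prop := ∀ l, I l = V4.F ∨ I l = V4.T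

/-- Value of the conjunction of a list of literals. -/
def evalConj (I : Interp α) (L : List (Lit α)) : V4 := (L.map I).foldr min V4.T

/-- Value of the conjunction `not B1 ∧ ⋯ ∧ not Bk`. -/
def evalNegs (I : Interp α) (L : List (Lit α)) : V4 :=
  (L.map (fun b => V4.notv (I b))).foldr min V4.T

/-- Value of the disjunction of a list of literals. -/
def evalDisj (I : Interp α) (L : List (Lit α)) : V4 := (L.map I).foldr max V4.F

/-- Value of an ordered disjunction of the given (nonempty) list of values.
(`F*` is a right identity for `×`, so the fold computes `v1 × ⋯ × vn`.) -/
def evalOD (vs : List V4) : V4 := vs.foldr V4.times V4.Fs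

/-- Pointwise `≤` on interpretations. -/
def interpLE (I J : Interp α) : Prop := ∀ l, I l ≤ J l

/-- The four-valued relation `⪯`: `u ⪯ v` iff `u = v` or `u ≺ v`, where
`F ≺ F*`, `F ≺ T*`, `F ≺ T` and `T* ≺ T`.  On three-valued (solid)
interpretations it restricts to the ordering generated by `F ≺ F*`, `F ≺ T`. -/
def preceq (u v : V4) : Prop :=
  u = v ∨ (u = V4.F ∧ v ≠ V4.F) ∨ (u = V4.Ts ∧ v = V4.T)

/-- Pointwise `⪯` on interpretations. -/
def interpPreceq (I J : Interp α) : Prop := ∀ l, preceq (I l) (J l)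

/-- The set of literals that are `T` in `I`. -/
def collapse (I : Interp α) : Set (Lit α) := { l | I l = V4.T }

/-! ### LPOD rules -/

/-- An LPOD rule `C1 × ⋯ × Cn ← A1,…,Am, not B1,…,not Bk` with head
`c1 :: cs` (so the head is nonempty). -/
structure Rule (α : Type) where
  c1 : Lit α
  cs : List (Lit α)
  pos : List (Lit α)
  neg : List (Lit α)

def Rule.headList (R : Rule α) : List (Lit α) := R.c1 :: R.cs

def Rule.headVal (R : Rule α) (I : Interp α) : V4 := evalOD (R.headList.map I)

def Rule.bodyVal (R : Rule α) (I : Interp α) : V4 :=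
  min (evalConj I R.pos) (evalNegs I R.neg)

/-- `I` satisfies the rule `R` (the rule evaluates to `T`). -/
def ruleSat (I : Interp α) (R : Rule α) : Prop := R.bodyVal I ≤ R.headVal I

/-- `I` is a model of the LPOD `P`. -/
def isModel (I : Interp α) (P : Set (Rule α)) : Prop := ∀ R ∈ P, ruleSat I R

/-! ### The ×-reduct of an LPOD -/

/-- A reduct rule `C ← [F*,] A1,…,Am`; `fstar` records whether the constant `F*`
occurs in the body. -/
structure RedRule (α : Type) where
  head : Lit α
  pos : List (Lit α)
  fstar : Bool

def RedRule.bodyVal (r : RedRule α) (I : Interp α) : V4 :=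
  min (if r.fstar then V4.Fs else V4.T) (evalConj I r.pos)

def redSat (I : Interp α) (r : RedRule α) : Prop := r.bodyVal I ≤ I r.head

def redModel (I : Interp α) (Q : Set (RedRule α)) : Prop := ∀ r ∈ Q, redSat I r

/-- Reduct rules generated by a head `C1,…,Cn`: rules `Cj ← F*, body` for
`j < r` and `Cr ← body`, where `r` is the least index with
`I C1 = ⋯ = I C_{r-1} = F*` and (`r = n` or `I Cr ≠ F*`). -/
def xredHead (I : Interp α) (body : List (Lit α)) : List (Lit α) → List (RedRule α)
  | [] => []
  | [c] => [⟨c, body, false⟩]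
  | c :: c' :: rest =>
    if I c = V4.Fs then ⟨c, body, true⟩ :: xredHead I body (c' :: rest)
    else [⟨c, body, false⟩]

/-- The ×-reduct of a rule w.r.t. `I`. -/
def xredRule (I : Interp α) (R : Rule α) : List (RedRule α) :=
  if ∃ b ∈ R.neg, I b = V4.T then [] else xredHead I R.pos R.headList

/-- The ×-reduct of an LPOD w.r.t. `I`. -/
def xreduct (I : Interp α) (P : Set (Rule α)) : Set (RedRule α) :=
  { r | ∃ R ∈ P, r ∈ xredRule I R }

/-- `M` is a three-valued answer set of the LPOD `P`: a consistent three-valued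
interpretation that is the `≤`-least (three-valued) model of `P^M_×`. -/
def threeAnswerSet (P : Set (Rule α)) (M : Interp α) : Prop :=
  solid M ∧ consistentI M ∧ redModel M (xreduct M P) ∧
  ∀ N : Interp α, solid N → redModel N (xreduct M P) → interpLE M N

/-! ### Two-valued notions: Brewka answer sets and GL answer sets -/

/-- A set of literals is consistent if it contains no complementary pair. -/
def twoConsistent (N : Set (Lit α)) : Prop :=
  ∀ a : α, ¬ (Lit.mk a true ∈ N ∧ Lit.mk a false ∈ N)

/-- `N` is a (two-valued) Brewka-model of the LPOD `P`. -/
def brewkaModel (N : Set (Lit α)) (P : Set (Rule α)) : Prop :=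
  ∀ R ∈ P, (∀ a ∈ R.pos, a ∈ N) → (∀ b ∈ R.neg, b ∉ N) → ∃ c ∈ R.headList, c ∈ N

/-- A positive rule `C ← A1,…,Am`. -/
structure PosRule (α : Type) where
  head : Lit α
  pos : List (Lit α)

/-- `N` is a two-valued model of a positive program. -/
def posModel (N : Set (Lit α)) (Q : Set (PosRule α)) : Prop :=
  ∀ r ∈ Q, (∀ a ∈ r.pos, a ∈ N) → r.head ∈ N

/-- The Brewka ×-reduct of an LPOD w.r.t. a set of literals `N`:
`Ci ← A1,…,Am` whenever `Ci ∈ N` and `N ∩ {C1,…,C_{i-1},B1,…,Bk} = ∅`. -/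
def brewkaReduct (N : Set (Lit α)) (P : Set (Rule α)) : Set (PosRule α) :=
  { r | ∃ R ∈ P, ∃ l1 l2 : List (Lit α),
      R.headList = l1 ++ r.head :: l2 ∧ r.pos = R.pos ∧ r.head ∈ N ∧
      (∀ c ∈ l1, c ∉ N) ∧ (∀ b ∈ R.neg, b ∉ N) }

/-- `N` is a Brewka answer set of the LPOD `P`. -/
def brewkaAnswerSet (P : Set (Rule α)) (N : Set (Lit α)) : Prop :=
  twoConsistent N ∧ brewkaModel N P ∧ posModel N (brewkaReduct N P) ∧
  ∀ N', posModel N' (brewkaReduct N P) → N ⊆ N'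

/-- The Gelfond–Lifschitz reduct of an extended logic program (an LPOD all
of whose rule heads are single literals) w.r.t. a set of literals `N`. -/
def glReduct (P : Set (Rule α)) (N : Set (Lit α)) : Set (PosRule α) :=
  { r | ∃ R ∈ P, (∀ b ∈ R.neg, b ∉ N) ∧ r.head = R.c1 ∧ r.pos = R.pos }

/-- `N` is a standard answer set of the extended logic program `P`: a consistent
set of literals that is the least model of `P^N`. -/
def stdAnswerSet (P : Set (Rule α)) (N : Set (Lit α)) : Prop :=
  twoConsistent N ∧ posModel N (glReduct P N) ∧
  ∀ N', posModel N' (glReduct P N) → N ⊆ N'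

/-! ### DLPODs -/

/-- A DLPOD rule `𝒞1 × ⋯ × 𝒞n ← A1,…,Am, not B1,…,not Bk`, where each `𝒞i`
is a disjunction of literals; the head is `c1 :: cs` (nonempty). -/
structure DRule (α : Type) where
  c1 : List (Lit α)
  cs : List (List (Lit α))
  pos : List (Lit α)
  neg : List (Lit α)

def DRule.headList (R : DRule α) : List (List (Lit α)) := R.c1 :: R.cs

def DRule.headVal (R : DRule α) (I : Interp α) : V4 :=
  evalOD (R.headList.map (evalDisj I))

def DRule.bodyVal (R : DRule α) (I : Interp α) : V4 :=
  min (evalConj I R.pos) (evalNegs I R.neg)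

def dRuleSat (I : Interp α) (R : DRule α) : Prop := R.bodyVal I ≤ R.headVal I

def isDModel (I : Interp α) (P : Set (DRule α)) : Prop := ∀ R ∈ P, dRuleSat I R

/-- A disjunctive reduct rule `𝒞 ← [F*,] A1,…,Am`. -/
structure DRedRule (α : Type) where
  head : List (Lit α)
  pos : List (Lit α)
  fstar : Bool

def DRedRule.bodyVal (r : DRedRule α) (I : Interp α) : V4 :=
  min (if r.fstar then V4.Fs else V4.T) (evalConj I r.pos)

def dredSat (I : Interp α) (r : DRedRule α) : Prop := r.bodyVal I ≤ evalDisj I r.head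

def dredModel (I : Interp α) (Q : Set (DRedRule α)) : Prop := ∀ r ∈ Q, dredSat I r

def dxredHead (I : Interp α) (body : List (Lit α)) :
    List (List (Lit α)) → List (DRedRule α)
  | [] => []
  | [c] => [⟨c, body, false⟩]
  | c :: c' :: rest =>
    if evalDisj I c = V4.Fs then ⟨c, body, true⟩ :: dxredHead I body (c' :: rest)
    else [⟨c, body, false⟩]

/-- The ×-reduct of a DLPOD rule w.r.t. `I`. -/
def dxredRule (I : Interp α) (R : DRule α) : List (DRedRule α) :=
  if ∃ b ∈ R.neg, I b = V4.T then [] else dxredHead I R.pos R.headList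

/-- The ×-reduct of a DLPOD w.r.t. `I`. -/
def dxreduct (I : Interp α) (P : Set (DRule α)) : Set (DRedRule α) :=
  { r | ∃ R ∈ P, r ∈ dxredRule I R }

/-- `M` is an answer set of the DLPOD `P`: a consistent three-valued
interpretation that is a `≤`-minimal (three-valued) model of `P^M_×`. -/
def dAnswerSet (P : Set (DRule α)) (M : Interp α) : Prop :=
  solid M ∧ consistentI M ∧ dredModel M (dxreduct M P) ∧
  ∀ N : Interp α, solid N → dredModel N (dxreduct M P) → interpLE N M → N = M

/-- A positive disjunctive rule `C1 ∨ ⋯ ∨ Cq ← A1,…,Am`. -/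
structure DPosRule (α : Type) where
  head : List (Lit α)
  pos : List (Lit α)

/-- `N` is a two-valued model of a positive disjunctive program. -/
def dposModel (N : Set (Lit α)) (Q : Set (DPosRule α)) : Prop :=
  ∀ r ∈ Q, (∀ a ∈ r.pos, a ∈ N) → ∃ c ∈ r.head, c ∈ N

/-- The Gelfond–Lifschitz reduct of a disjunctive extended logic program (a
DLPOD all of whose rule heads are single disjunctions). -/
def glDReduct (P : Set (DRule α)) (N : Set (Lit α)) : Set (DPosRule α) :=
  { r | ∃ R ∈ P, (∀ b ∈ R.neg, b ∉ N) ∧ r.head = R.c1 ∧ r.pos = R.pos }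

/-- `N` is a standard disjunctive answer set: a consistent set of literals that
is a minimal two-valued model of `P^N`. -/
def stdDAnswerSet (P : Set (DRule α)) (N : Set (Lit α)) : Prop :=
  twoConsistent N ∧ dposModel N (glDReduct P N) ∧
  ∀ N', dposModel N' (glDReduct P N) → N' ⊆ N → N' = N

/-! ### Auxiliary material for Statement 5 -/

namespace V4

lemma aux_fs_le_iff (x : V4) : Fs ≤ x ↔ x ≠ F := by cases x <;> decide

lemma aux_t_le_iff (x : V4) : T ≤ x ↔ x = T := by cases x <;> decide

lemma aux_f_le (x : V4) : F ≤ x := by cases x <;> decide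

lemma aux_le_t (x : V4) : x ≤ T := by cases x <;> decide

lemma aux_eq_fs (v : V4) (h1 : Fs ≤ v) (h2 : ¬ T ≤ v) (h3 : v ≠ Ts) : v = Fs := by
  cases v <;> revert h1 h2 h3 <;> decide

end V4

lemma aux_evalConj_nil (I : Interp α) : evalConj I [] = V4.T := rfl

lemma aux_evalConj_cons (I : Interp α) (a : Lit α) (L : List (Lit α)) :
    evalConj I (a :: L) = min (I a) (evalConj I L) := rfl

lemma aux_le_evalConj_iff {I : Interp α} {L : List (Lit α)} {v : V4} :
    v ≤ evalConj I L ↔ ∀ a ∈ L, v ≤ I a := by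
  induction L with
  | nil => simpa [aux_evalConj_nil] using V4.aux_le_t v
  | cons a L ih => simp [aux_evalConj_cons, le_min_iff, ih, List.forall_mem_cons]

lemma aux_evalConj_ne_Ts {I : Interp α} (hI : solid I) (L : List (Lit α)) :
    evalConj I L ≠ V4.Ts := by
  induction L with
  | nil => simp [aux_evalConj_nil]
  | cons a L ih =>
    rw [aux_evalConj_cons]
    rcases le_total (I a) (evalConj I L) with h | h
    · rw [min_eq_left h]; exact hI a
    · rw [min_eq_right h]; exact ih

/-- Reachability in the walk of `xredHead`. -/
lemma aux_xredHead_reach (I : Interp α) (body : List (Lit α)) :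
    ∀ (l1 : List (Lit α)) (c : Lit α) (l2 : List (Lit α)),
      (∀ k ∈ l1, I k = V4.Fs) →
      ∃ r ∈ xredHead I body (l1 ++ c :: l2), r.head = c ∧ r.pos = body ∧
        (I c ≠ V4.Fs → r.fstar = false) := by
  intro l1
  induction l1 with
  | nil =>
    intro c l2 _
    cases l2 with
    | nil => exact ⟨⟨c, body, false⟩, by simp [xredHead], rfl, rfl, fun _ => rfl⟩
    | cons c' t =>
      by_cases h : I c = V4.Fs
      · exact ⟨⟨c, body, true⟩, by simp [xredHead, h], rfl, rfl, fun hc => absurd h hc⟩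
      · exact ⟨⟨c, body, false⟩, by simp [xredHead, h], rfl, rfl, fun _ => rfl⟩
  | cons k t ih =>
    intro c l2 hpre
    have hk : I k = V4.Fs := hpre k (by simp)
    obtain ⟨r, hr, hh⟩ := ih c l2 (fun x hx => hpre x (by simp [hx]))
    refine ⟨r, ?_, hh⟩
    have hrw : (k :: t) ++ c :: l2 = k :: (t ++ c :: l2) := rfl
    rw [hrw]
    cases hte : t ++ c :: l2 with
    | nil => simp at hte
    | cons x xs =>
      rw [hte] at hr
      simp only [xredHead, hk, if_true]
      exact List.mem_cons_of_mem _ hr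

/-- Inversion for membership in `xredHead`. -/
lemma aux_xredHead_inv (I : Interp α) (body : List (Lit α)) :
    ∀ (hs : List (Lit α)) (r : RedRule α), r ∈ xredHead I body hs →
      r.pos = body ∧ ∃ l1 l2, hs = l1 ++ r.head :: l2 ∧ (∀ k ∈ l1, I k = V4.Fs) ∧
        (r.fstar = true → I r.head = V4.Fs) ∧
        (r.fstar = false → I r.head ≠ V4.Fs ∨ l2 = []) := by
  intro hs
  induction hs with
  | nil => intro r hr; simp [xredHead] at hr
  | cons c tl ih =>
    intro r hr
    cases tl with
    | nil =>
      simp [xredHead] at hr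
      subst hr
      exact ⟨rfl, [], [], rfl, by simp, by simp, fun _ => Or.inr rfl⟩
    | cons c' rest =>
      by_cases h : I c = V4.Fs
      · simp only [xredHead, h, if_true, List.mem_cons] at hr
        rcases hr with hr | hr
        · subst hr
          exact ⟨rfl, [], c' :: rest, rfl, by simp, fun _ => h, by simp⟩
        · obtain ⟨hpos, l1, l2, heq, hFs, h1, h2⟩ := ih r hr
          refine ⟨hpos, c :: l1, l2, by rw [List.cons_append, ← heq], ?_, h1, h2⟩
          intro k hk
          rcases List.mem_cons.1 hk with hk | hk
          · subst hk; exact h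
          · exact hFs k hk
      · simp only [xredHead, h, if_false, List.mem_singleton] at hr
        subst hr
        exact ⟨rfl, [], c' :: rest, rfl, by simp, by simp, fun _ => Or.inl h⟩

/-- Literals derivable with value at least `F*` from `P` relative to `N`. -/
inductive Der (P : Set (Rule α)) (N : Set (Lit α)) : Lit α → Prop
  | intro (R : Rule α) (l1 l2 : List (Lit α)) (c : Lit α)
      (hR : R ∈ P) (hneg : ∀ b ∈ R.neg, b ∉ N)
      (hpos : ∀ a ∈ R.pos, a ∉ N → Der P N a)
      (hhl : R.headList = l1 ++ c :: l2)
      (hl1N : ∀ k ∈ l1, k ∉ N)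
      (hl1D : ∀ k ∈ l1, Der P N k) : Der P N c

lemma aux_der_of_prefix_aux {P : Set (Rule α)} {N : Set (Lit α)} {R : Rule α}
    (hR : R ∈ P) (hneg : ∀ b ∈ R.neg, b ∉ N)
    (hpos : ∀ a ∈ R.pos, a ∉ N → Der P N a) :
    ∀ (l1 pre : List (Lit α)) (c : Lit α) (l2 : List (Lit α)),
      (∀ k ∈ pre, k ∉ N ∧ Der P N k) →
      R.headList = pre ++ (l1 ++ c :: l2) →
      (∀ k ∈ l1, k ∉ N) → Der P N c := by
  intro l1
  induction l1 with
  | nil =>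
    intro pre c l2 hpre hhl _
    exact Der.intro R pre l2 c hR hneg hpos (by simpa using hhl)
      (fun k hk => (hpre k hk).1) (fun k hk => (hpre k hk).2)
  | cons k t ih =>
    intro pre c l2 hpre hhl hl1
    have hkN : k ∉ N := hl1 k (by simp)
    have hkD : Der P N k :=
      Der.intro R pre (t ++ c :: l2) k hR hneg hpos (by simpa using hhl)
        (fun x hx => (hpre x hx).1) (fun x hx => (hpre x hx).2)
    refine ih (pre ++ [k]) c l2 ?_ (by simpa [List.append_assoc] using hhl)
      (fun x hx => hl1 x (by simp [hx]))
    intro x hx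
    rcases List.mem_append.1 hx with h | h
    · exact hpre x h
    · simp at h; subst h; exact ⟨hkN, hkD⟩

lemma aux_der_of_prefix {P : Set (Rule α)} {N : Set (Lit α)} {R : Rule α}
    (hR : R ∈ P) (hneg : ∀ b ∈ R.neg, b ∉ N)
    (hpos : ∀ a ∈ R.pos, a ∉ N → Der P N a)
    {l1 : List (Lit α)} {c : Lit α} {l2 : List (Lit α)}
    (hhl : R.headList = l1 ++ c :: l2) (hl1 : ∀ k ∈ l1, k ∉ N) : Der P N c :=
  aux_der_of_prefix_aux hR hneg hpos l1 [] c l2 (by simp) (by simpa using hhl) hl1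

-- The canonical three-valued interpretation associated to `N`.
open Classical in
noncomputable def mkM (P : Set (Rule α)) (N : Set (Lit α)) : Interp α :=
  fun l => if l ∈ N then V4.T else if Der P N l then V4.Fs else V4.F

lemma aux_mkM_of_mem {P : Set (Rule α)} {N : Set (Lit α)} {l : Lit α} (h : l ∈ N) :
    mkM P N l = V4.T := by simp [mkM, h]

lemma aux_mkM_T_iff {P : Set (Rule α)} {N : Set (Lit α)} (l : Lit α) :
    mkM P N l = V4.T ↔ l ∈ N := by
  unfold mkM; split_ifs with h1 h2 <;> simp_all

lemma aux_mkM_Fs_iff {P : Set (Rule α)} {N : Set (Lit α)} (l : Lit α) :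
    mkM P N l = V4.Fs ↔ (l ∉ N ∧ Der P N l) := by
  unfold mkM; split_ifs with h1 h2 <;> simp_all

lemma aux_mkM_fsle_iff {P : Set (Rule α)} {N : Set (Lit α)} (l : Lit α) :
    V4.Fs ≤ mkM P N l ↔ (l ∈ N ∨ Der P N l) := by
  unfold mkM; split_ifs with h1 h2 <;> simp_all <;> decide

lemma aux_mkM_solid (P : Set (Rule α)) (N : Set (Lit α)) : solid (mkM P N) := by
  intro l; unfold mkM; split_ifs <;> simp

lemma aux_solid_cases {I : Interp α} (hI : solid I) (l : Lit α) :
    I l = V4.F ∨ I l = V4.Fs ∨ I l = V4.T := by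
  have := hI l; cases h : I l <;> simp_all

/-- If the positive body is `≥ F*` under `mkM`, the `Der` side condition holds. -/
lemma aux_pos_der {P : Set (Rule α)} {N : Set (Lit α)} {L : List (Lit α)}
    (h : V4.Fs ≤ evalConj (mkM P N) L) : ∀ a ∈ L, a ∉ N → Der P N a := by
  intro a ha hN
  have := aux_le_evalConj_iff.1 h a ha
  rcases (aux_mkM_fsle_iff a).1 this with h1 | h1
  · exact absurd h1 hN
  · exact h1

/-- Existence part: `mkM` is a model of its own reduct. -/
lemma aux_mkM_redModel {P : Set (Rule α)} {N : Set (Lit α)}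
    (hmodN : brewkaModel N P) :
    redModel (mkM P N) (xreduct (mkM P N) P) := by
  set M := mkM P N with hMdef
  rintro r ⟨R, hRP, hr⟩
  by_cases hd : ∃ b ∈ R.neg, M b = V4.T
  · simp [xredRule, hd] at hr
  · simp only [xredRule, hd, if_false] at hr
    have hneg : ∀ b ∈ R.neg, b ∉ N := by
      intro b hb hbN
      exact hd ⟨b, hb, aux_mkM_of_mem hbN⟩
    obtain ⟨hposeq, l1, l2, hhl, hFs, hf1, hf0⟩ := aux_xredHead_inv M R.pos _ r hr
    have hl1N : ∀ k ∈ l1, k ∉ N := fun k hk =>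
      ((aux_mkM_Fs_iff k).1 (hFs k hk)).1
    unfold redSat RedRule.bodyVal
    rw [hposeq]
    cases hfst : r.fstar with
    | true =>
      have : M r.head = V4.Fs := hf1 hfst
      rw [this]
      exact le_trans (min_le_left _ _) (by simp)
    | false =>
      rw [if_neg Bool.false_ne_true]
      have hmin : min V4.T (evalConj M R.pos) = evalConj M R.pos :=
        min_eq_right (V4.aux_le_t _)
      rw [hmin]
      by_cases hge : V4.Fs ≤ evalConj M R.pos
      · have hder : Der P N r.head :=
          aux_der_of_prefix hRP hneg (aux_pos_der hge) hhl hl1N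
      -- now split on whether the body is fully true
        by_cases hT : V4.T ≤ evalConj M R.pos
        · -- body is T, so all positive atoms are in N
          have hposN : ∀ a ∈ R.pos, a ∈ N := fun a ha =>
            (aux_mkM_T_iff a).1 ((V4.aux_t_le_iff _).1 (aux_le_evalConj_iff.1 hT a ha))
          have hheadN : r.head ∈ N := by
            by_contra hnotN
            have hMhead : M r.head = V4.Fs := (aux_mkM_Fs_iff r.head).2 ⟨hnotN, hder⟩
            rcases hf0 hfst with hc | hc
            · exact hc hMhead
            · -- all heads outside N, contradicting brewkaModel
              obtain ⟨c, hc1, hc2⟩ := hmodN R hRP hposN hneg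
              rw [hhl, hc] at hc1
              rcases List.mem_append.1 hc1 with h1 | h1
              · exact hl1N c h1 hc2
              · simp at h1; subst h1; exact hnotN hc2
          rw [(V4.aux_t_le_iff _).1 hT, show M r.head = V4.T from aux_mkM_of_mem hheadN]
        · have hne : evalConj M R.pos ≠ V4.Ts :=
            aux_evalConj_ne_Ts (aux_mkM_solid P N) R.pos
          rw [V4.aux_eq_fs _ hge hT hne]
          exact (aux_mkM_fsle_iff r.head).2 (Or.inr hder)
      · have : evalConj M R.pos = V4.F := by
          rcases (V4.aux_fs_le_iff (evalConj M R.pos)).not.1 hge with h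
          simpa using h
        rw [this]
        exact V4.aux_f_le _

/-- Existence part: `mkM` is below every solid model of its reduct. -/
lemma aux_mkM_least {P : Set (Rule α)} {N : Set (Lit α)}
    (hleastN : ∀ N', posModel N' (brewkaReduct N P) → N ⊆ N')
    (I : Interp α) (hIs : solid I) (hIm : redModel I (xreduct (mkM P N) P)) :
    interpLE (mkM P N) I := by
  set M := mkM P N with hMdef
  -- Step 1: N ⊆ { l | I l = T }
  have hstep1 : ∀ l ∈ N, I l = V4.T := by
    have hpm : posModel {l | l ∈ N ∧ I l = V4.T} (brewkaReduct N P) := by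
      rintro pr ⟨R, hRP, l1, l2, hhl, hposeq, hheadN, hl1N, hnegN⟩ hbody
      have hposN : ∀ a ∈ R.pos, a ∈ N := by
        intro a ha; rw [← hposeq] at ha; exact (hbody a ha).1
      have hposT : ∀ a ∈ R.pos, I a = V4.T := by
        intro a ha; rw [← hposeq] at ha; exact (hbody a ha).2
      have hposD : ∀ a ∈ R.pos, a ∉ N → Der P N a := fun a ha hN =>
        absurd (hposN a ha) hN
      -- each element of l1 is Der, hence Fs under M
      have hl1Fs : ∀ k ∈ l1, M k = V4.Fs := by
        intro k hk
        obtain ⟨s, t, hst⟩ := List.append_of_mem hk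
        have hhl' : R.headList = s ++ k :: (t ++ pr.head :: l2) := by
          rw [hhl, hst]; simp
        have hder : Der P N k :=
          aux_der_of_prefix hRP hnegN hposD hhl'
            (fun x hx => hl1N x (by rw [hst]; simp [hx]))
        exact (aux_mkM_Fs_iff k).2 ⟨hl1N k hk, hder⟩
      obtain ⟨r, hrmem, hrhead, hrpos, hrf⟩ :=
        aux_xredHead_reach M R.pos l1 pr.head l2 hl1Fs
      have hnotdrop : ¬ ∃ b ∈ R.neg, M b = V4.T := by
        rintro ⟨b, hb, hbT⟩
        exact hnegN b hb ((aux_mkM_T_iff b).1 hbT)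
      have hrred : r ∈ xreduct M P := by
        refine ⟨R, hRP, ?_⟩
        simp only [xredRule, hnotdrop, if_false]
        rw [Rule.headList] at hhl ⊢
        rw [hhl]
        exact hrmem
      have hsat := hIm r hrred
      have hMfst : r.fstar = false := hrf (by
        rw [show M pr.head = V4.T from aux_mkM_of_mem hheadN]; simp)
      have hbodyT : RedRule.bodyVal r I = V4.T := by
        unfold RedRule.bodyVal
        rw [hMfst, hrpos, ← hposeq, if_neg Bool.false_ne_true]
        have : V4.T ≤ evalConj I pr.pos := by
          rw [aux_le_evalConj_iff]
          intro a ha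
          rw [(hbody a ha).2]
        exact le_antisymm (V4.aux_le_t _) (le_trans this (by rw [hposeq]; exact le_min (V4.aux_le_t _) le_rfl))
      have : I r.head = V4.T := by
        have := hsat
        unfold redSat at this
        rw [hbodyT] at this
        exact (V4.aux_t_le_iff _).1 this
      exact ⟨hheadN, by rw [← hrhead]; exact this⟩
    intro l hl
    exact (hleastN _ hpm hl).2
  -- Step 2: Der l → Fs ≤ I l
  have hstep2 : ∀ l, Der P N l → V4.Fs ≤ I l := by
    intro l hder
    induction hder with
    | intro R l1 l2 c hR hneg hpos hhl hl1N hl1D ihpos ihl1 =>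
      have hl1Fs : ∀ k ∈ l1, M k = V4.Fs := fun k hk =>
        (aux_mkM_Fs_iff k).2 ⟨hl1N k hk, hl1D k hk⟩
      obtain ⟨r, hrmem, hrhead, hrpos, _⟩ :=
        aux_xredHead_reach M R.pos l1 c l2 hl1Fs
      have hnotdrop : ¬ ∃ b ∈ R.neg, M b = V4.T := by
        rintro ⟨b, hb, hbT⟩
        exact hneg b hb ((aux_mkM_T_iff b).1 hbT)
      have hrred : r ∈ xreduct M P := by
        refine ⟨R, hR, ?_⟩
        simp only [xredRule, hnotdrop, if_false]
        rw [Rule.headList] at hhl ⊢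
        rw [hhl]
        exact hrmem
      have hsat := hIm r hrred
      unfold redSat at hsat
      have hbodyge : V4.Fs ≤ RedRule.bodyVal r I := by
        unfold RedRule.bodyVal
        rw [hrpos]
        refine le_min (by cases r.fstar <;> simp <;> decide) ?_
        rw [aux_le_evalConj_iff]
        intro a ha
        by_cases haN : a ∈ N
        · rw [hstep1 a haN]; decide
        · exact ihpos a ha haN
      rw [← hrhead]
      exact le_trans hbodyge hsat
  intro l
  rw [hMdef]
  by_cases hN : l ∈ N
  · rw [aux_mkM_of_mem hN, hstep1 l hN]
  · by_cases hD : Der P N l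
    · rw [(aux_mkM_Fs_iff l).2 ⟨hN, hD⟩]
      exact hstep2 l hD
    · rw [show mkM P N l = V4.F by simp [mkM, hN, hD]]
      exact V4.aux_f_le _

/-- Uniqueness direction 1: every answer set above. -/
lemma aux_der_le {P : Set (Rule α)} {N : Set (Lit α)} {M' : Interp α}
    (hT' : ∀ l, M' l = V4.T ↔ l ∈ N) (hs' : solid M')
    (hm' : redModel M' (xreduct M' P)) :
    ∀ l, Der P N l → V4.Fs ≤ M' l := by
  intro l hder
  induction hder with
  | intro R l1 l2 c hR hneg hpos hhl hl1N hl1D ihpos ihl1 =>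
    have hl1Fs : ∀ k ∈ l1, M' k = V4.Fs := by
      intro k hk
      have h1 := ihl1 k hk
      have h2 : M' k ≠ V4.T := fun h => hl1N k hk ((hT' k).1 h)
      rcases aux_solid_cases hs' k with h | h | h
      · rw [h] at h1; exact absurd h1 (by decide)
      · exact h
      · exact absurd h h2
    obtain ⟨r, hrmem, hrhead, hrpos, _⟩ :=
      aux_xredHead_reach M' R.pos l1 c l2 hl1Fs
    have hnotdrop : ¬ ∃ b ∈ R.neg, M' b = V4.T := by
      rintro ⟨b, hb, hbT⟩
      exact hneg b hb ((hT' b).1 hbT)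
    have hrred : r ∈ xreduct M' P := by
      refine ⟨R, hR, ?_⟩
      simp only [xredRule, hnotdrop, if_false]
      rw [Rule.headList] at hhl ⊢
      rw [hhl]
      exact hrmem
    have hsat := hm' r hrred
    unfold redSat at hsat
    have hbodyge : V4.Fs ≤ RedRule.bodyVal r M' := by
      unfold RedRule.bodyVal
      rw [hrpos]
      refine le_min (by cases r.fstar <;> simp <;> decide) ?_
      rw [aux_le_evalConj_iff]
      intro a ha
      by_cases haN : a ∈ N
      · rw [(hT' a).2 haN]; decide
      · exact ihpos a ha haN
    rw [← hrhead]
    exact le_trans hbodyge hsat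

/-- Uniqueness direction 2: `mkM` is a model of the reduct of any candidate. -/
lemma aux_mkM_model_of_reduct {P : Set (Rule α)} {N : Set (Lit α)} {M' : Interp α}
    (hT' : ∀ l, M' l = V4.T ↔ l ∈ N)
    (hm' : redModel M' (xreduct M' P)) :
    redModel (mkM P N) (xreduct M' P) := by
  set M := mkM P N with hMdef
  rintro r ⟨R, hRP, hr⟩
  by_cases hd : ∃ b ∈ R.neg, M' b = V4.T
  · simp [xredRule, hd] at hr
  · simp only [xredRule, hd, if_false] at hr
    have hneg : ∀ b ∈ R.neg, b ∉ N := by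
      intro b hb hbN
      exact hd ⟨b, hb, (hT' b).2 hbN⟩
    obtain ⟨hposeq, l1, l2, hhl, hFs, hf1, hf0⟩ := aux_xredHead_inv M' R.pos _ r hr
    have hl1N : ∀ k ∈ l1, k ∉ N := fun k hk hkN => by
      have := hFs k hk
      rw [(hT' k).2 hkN] at this
      exact absurd this (by decide)
    unfold redSat RedRule.bodyVal
    rw [hposeq]
    by_cases hge : V4.Fs ≤ evalConj M R.pos
    · have hder : Der P N r.head :=
        aux_der_of_prefix hRP hneg (aux_pos_der hge) hhl hl1N
      cases hfst : r.fstar with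
      | true =>
        refine le_trans (min_le_left _ _) ?_
        rw [if_pos rfl]
        exact (aux_mkM_fsle_iff r.head).2 (Or.inr hder)
      | false =>
        rw [if_neg Bool.false_ne_true]
        have hmin : min V4.T (evalConj M R.pos) = evalConj M R.pos :=
          min_eq_right (V4.aux_le_t _)
        rw [hmin]
        by_cases hT : V4.T ≤ evalConj M R.pos
        · -- all positive atoms in N; use that M' satisfies this very rule
          have hposN : ∀ a ∈ R.pos, a ∈ N := fun a ha =>
            (aux_mkM_T_iff a).1 ((V4.aux_t_le_iff _).1 (aux_le_evalConj_iff.1 hT a ha))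
          have hrred : r ∈ xreduct M' P := ⟨R, hRP, by
            simp only [xredRule, hd, if_false]; exact hr⟩
          have hsat := hm' r hrred
          unfold redSat RedRule.bodyVal at hsat
          rw [hposeq, hfst, if_neg Bool.false_ne_true] at hsat
          have hbT : V4.T ≤ evalConj M' R.pos := by
            rw [aux_le_evalConj_iff]
            intro a ha
            rw [(hT' a).2 (hposN a ha)]
          have hMhT : M' r.head = V4.T := by
            have : V4.T ≤ M' r.head :=
              le_trans (le_min (V4.aux_le_t _) hbT) hsat
            exact (V4.aux_t_le_iff _).1 this
          have : r.head ∈ N := (hT' r.head).1 hMhT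
          rw [(V4.aux_t_le_iff _).1 hT, show M r.head = V4.T from aux_mkM_of_mem this]
        · have hne : evalConj M R.pos ≠ V4.Ts :=
            aux_evalConj_ne_Ts (aux_mkM_solid P N) R.pos
          rw [V4.aux_eq_fs _ hge hT hne]
          exact (aux_mkM_fsle_iff r.head).2 (Or.inr hder)
    · have hF : evalConj M R.pos = V4.F := by
        rcases (V4.aux_fs_le_iff (evalConj M R.pos)).not.1 hge with h
        simpa using h
      refine le_trans (min_le_right _ _) ?_
      rw [hF]
      exact V4.aux_f_le _

/-- For every Brewka answer set `N` of an LPOD `P`, there is a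
unique three-valued interpretation `M` with `collapse M = N` that is a
three-valued answer set of `P`. -/
theorem brewka_exists_unique_threeAnswerSet {α : Type} (P : Set (Rule α))
    (N : Set (Lit α)) (h : brewkaAnswerSet P N) :
    ∃! M : Interp α, collapse M = N ∧ threeAnswerSet P M := by
  obtain ⟨hconsN, hmodN, hpmN, hleastN⟩ := h
  have hcoll : collapse (mkM P N) = N := by
    ext l
    exact aux_mkM_T_iff l
  have hsolid : solid (mkM P N) := aux_mkM_solid P N
  have hconsI : consistentI (mkM P N) := by
    intro a ⟨h1, h2⟩
    exact hconsN a ⟨(aux_mkM_T_iff _).1 h1, (aux_mkM_T_iff _).1 h2⟩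
  refine ⟨mkM P N, ⟨hcoll, hsolid, hconsI, aux_mkM_redModel hmodN,
    fun I hIs hIm => aux_mkM_least hleastN I hIs hIm⟩, ?_⟩
  rintro M' ⟨hcoll', hs', hc', hm', hl'⟩
  have hT' : ∀ l, M' l = V4.T ↔ l ∈ N := by
    intro l
    rw [← hcoll']
    exact Iff.rfl
  -- mkM ≤ M'
  have h1 : interpLE (mkM P N) M' := by
    intro l
    by_cases hN : l ∈ N
    · rw [aux_mkM_of_mem hN, (hT' l).2 hN]
    · by_cases hD : Der P N l
      · rw [(aux_mkM_Fs_iff l).2 ⟨hN, hD⟩]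
        exact aux_der_le hT' hs' hm' l hD
      · rw [show mkM P N l = V4.F by unfold mkM; simp [hN, hD]]
        exact V4.aux_f_le _
  -- M' ≤ mkM
  have h2 : interpLE M' (mkM P N) :=
    hl' (mkM P N) (aux_mkM_solid P N) (aux_mkM_model_of_reduct hT' hm')
  funext l
  exact le_antisymm (h2 l) (h1 l)
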